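/- Let s ∈ ℂ with −1 < Re(s) < 0. Then the function t ↦ (Σ_{n=0}^∞ 1/(1 + 2^n/t)) · t^{s-1} is integrable on (0, ∞), and ∫₀^∞ (Σ_{n=0}^∞ 1/(1 + 2^n/t)) t^{s-1} dt = (π / sin(π(s − 1))) · 1/(1 − 2^s), where 2^s = exp(s log 2) and sin denotes the complex sine. -/

import Mathlib

open Real Filter Topology MeasureTheory Set
open scoped ENNReal NNReal


lemma image_phi : (fun u : ℝ => u / (1 - u)) '' (Set.Ioo 0 1) = Set.Ioi 0 := by
  ext y
  simp only [mem_image, mem_Ioo, mem_Ioi]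
  constructor
  · rintro ⟨u, ⟨hu0, hu1⟩, rfl⟩
    exact div_pos hu0 (by linarith)
  · intro hy
    refine ⟨y / (1 + y), ⟨div_pos hy (by linarith), ?_⟩, ?_⟩
    · rw [div_lt_one (by linarith)]; linarith
    · rw [eq_comm, eq_div_iff]
      · field_simp; ring
      · intro h
        apply absurd h
        have : (0:ℝ) < 1 - y / (1 + y) := by
          rw [sub_pos, div_lt_one (by linarith)]; linarith
        linarith

lemma keyA {s : ℂ} (h1 : -1 < s.re) (h2 : s.re < 0) :
    IntegrableOn (fun t : ℝ => (t:ℂ)^s / (t + 1)) (Set.Ioi 0) ∧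
    ∫ t in Set.Ioi (0:ℝ), (t:ℂ)^s / ((t:ℂ) + 1) =
      (π:ℂ) / Complex.sin (π * (s+1)) := by
  have hs1 : 0 < (s+1).re := by simp [Complex.add_re]; linarith
  have hs2 : 0 < (-s).re := by simp; linarith
  set φ : ℝ → ℝ := fun u => u / (1 - u) with hφ
  set φ' : ℝ → ℝ := fun u => ((1 - u)^2)⁻¹ with hφ'
  have hderiv : ∀ u ∈ Set.Ioo (0:ℝ) 1, HasDerivWithinAt φ (φ' u) (Set.Ioo 0 1) u := by
    intro u hu
    have h1u : 1 - u ≠ 0 := by simp only [mem_Ioo] at hu; intro h; linarith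
    have : HasDerivAt φ ((1 * (1 - u) - u * (0 - 1)) / (1 - u)^2) u :=
      (hasDerivAt_id u).div ((hasDerivAt_const u 1).sub (hasDerivAt_id u)) h1u
    refine (this.congr_deriv ?_).hasDerivWithinAt
    show _ = ((1 - u)^2)⁻¹
    ring
  have hinj : Set.InjOn φ (Set.Ioo 0 1) := by
    intro a ha b hb h
    simp only [mem_Ioo] at ha hb
    rw [hφ, div_eq_div_iff (by linarith) (by linarith)] at h
    nlinarith
  have hcongr : ∀ u ∈ Set.Ioo (0:ℝ) 1,
      |φ' u| • ((φ u : ℂ)^s / ((φ u : ℂ) + 1)) =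
      (u:ℂ) ^ (s + 1 - 1) * (1 - (u:ℂ)) ^ (-s - 1) := by
    intro u hu
    simp only [mem_Ioo] at hu
    have h1u : (0:ℝ) < 1 - u := by linarith
    have hw : (1 : ℂ) - (u:ℂ) ≠ 0 := by
      rw [← Complex.ofReal_one, ← Complex.ofReal_sub]
      exact_mod_cast h1u.ne'
    have hws : ((1:ℂ) - u) ^ s ≠ 0 := by
      rw [Complex.cpow_def_of_ne_zero hw]; exact Complex.exp_ne_zero _
    have habs : |φ' u| = ((1 - u)^2)⁻¹ := abs_of_pos (by positivity)
    have hpow : ((φ u : ℝ) : ℂ) ^ s = (u:ℂ)^s * (((1:ℂ) - u)^s)⁻¹ := by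
      have h0 : ((φ u : ℝ) : ℂ) = ((u * (1-u)⁻¹ : ℝ) : ℂ) := by
        rw [hφ]; push_cast [div_eq_mul_inv]; ring
      rw [h0, Complex.ofReal_mul, Complex.mul_cpow_ofReal_nonneg hu.1.le
        (inv_nonneg.mpr h1u.le), Complex.ofReal_inv, Complex.inv_cpow]
      · push_cast; ring
      · rw [Complex.arg_ofReal_of_nonneg h1u.le]
        exact Real.pi_ne_zero.symm
    have hden : ((φ u : ℝ) : ℂ) + 1 = ((1:ℂ) - u)⁻¹ := by
      have hm : ((1:ℂ) - u) * (((φ u : ℝ) : ℂ) + 1) = 1 := by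
        rw [hφ]; push_cast; field_simp; ring
      exact (inv_eq_of_mul_eq_one_right hm).symm
    have hr : (1-(u:ℂ))^(-s-1) = ((1-(u:ℂ))^s * (1-(u:ℂ)))⁻¹ := by
      rw [show -s-1 = -(s+1) by ring, Complex.cpow_neg, Complex.cpow_add _ _ hw,
        Complex.cpow_one]
    rw [habs, hpow, hden, hr, add_sub_cancel_right, Complex.real_smul]
    push_cast
    field_simp
  have hbeta : IntervalIntegrable
      (fun x : ℝ => (x:ℂ) ^ (s + 1 - 1) * (1 - (x:ℂ)) ^ (-s - 1)) volume 0 1 :=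
    Complex.betaIntegral_convergent hs1 hs2
  have hbetaIoo : IntegrableOn
      (fun x : ℝ => (x:ℂ) ^ (s + 1 - 1) * (1 - (x:ℂ)) ^ (-s - 1)) (Set.Ioo 0 1) :=
    (hbeta.1).mono_set Set.Ioo_subset_Ioc_self
  have hint : IntegrableOn (fun t : ℝ => (t:ℂ)^s / (t + 1)) (Set.Ioi 0) := by
    rw [← image_phi, integrableOn_image_iff_integrableOn_abs_deriv_smul
      measurableSet_Ioo hderiv hinj]
    exact (hbetaIoo.congr_fun (fun u hu => (hcongr u hu).symm) measurableSet_Ioo)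
  refine ⟨hint, ?_⟩
  have hval : Complex.betaIntegral (s+1) (-s) = (π:ℂ) / Complex.sin (π * (s+1)) := by
    have hG := Complex.Gamma_mul_Gamma_eq_betaIntegral hs1 hs2
    have h1' : s + 1 + -s = 1 := by ring
    rw [h1', Complex.Gamma_one, one_mul] at hG
    rw [← hG]
    have := Complex.Gamma_mul_Gamma_one_sub (s+1)
    rwa [show (1:ℂ) - (s+1) = -s by ring] at this
  calc ∫ t in Set.Ioi (0:ℝ), (t:ℂ)^s / ((t:ℂ) + 1)
      = ∫ u in Set.Ioo (0:ℝ) 1, |φ' u| • ((φ u : ℂ)^s / ((φ u : ℂ) + 1)) := by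
        rw [← image_phi, integral_image_eq_integral_abs_deriv_smul
          measurableSet_Ioo hderiv hinj]
    _ = ∫ u in Set.Ioo (0:ℝ) 1, (u:ℂ) ^ (s + 1 - 1) * (1 - (u:ℂ)) ^ (-s - 1) :=
        setIntegral_congr_fun measurableSet_Ioo hcongr
    _ = ∫ u in Set.Ioc (0:ℝ) 1, (u:ℂ) ^ (s + 1 - 1) * (1 - (u:ℂ)) ^ (-s - 1) :=
        (MeasureTheory.integral_Ioc_eq_integral_Ioo).symm
    _ = Complex.betaIntegral (s+1) (-s) := by
        rw [Complex.betaIntegral, intervalIntegral.integral_of_le zero_le_one]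
    _ = (π:ℂ) / Complex.sin (π * (s+1)) := hval


lemma keyB {s : ℂ} (h1 : -1 < s.re) (h2 : s.re < 0) {a : ℝ} (ha : 0 < a) :
    IntegrableOn (fun t : ℝ => (t:ℂ)^s / (t + a)) (Set.Ioi 0) ∧
    ∫ t in Set.Ioi (0:ℝ), (t:ℂ)^s / ((t:ℂ) + a) =
      (a:ℂ)^s * ((π:ℂ) / Complex.sin (π * (s+1))) := by
  have ha' : (a:ℂ) ≠ 0 := Complex.ofReal_ne_zero.mpr ha.ne'
  have hV : True := trivial
  have hcomp : ∀ x ∈ Set.Ioi (0:ℝ),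
      ((a*x : ℝ):ℂ)^s / (((a*x : ℝ):ℂ) + a) = ((a:ℂ)^s / a) * ((x:ℂ)^s / (x+1)) := by
    intro x hx
    have hx' : (0:ℝ) < x := hx
    have hx1 : ((x:ℂ) + 1) ≠ 0 := by
      intro h
      have := congrArg Complex.re h
      simp at this
      linarith
    rw [Complex.ofReal_mul, Complex.mul_cpow_ofReal_nonneg ha.le hx'.le]
    rw [show (a:ℂ) * x + a = a * ((x:ℂ) + 1) by ring]
    field_simp
  have hIcomp : IntegrableOn
      (fun x : ℝ => ((a*x : ℝ):ℂ)^s / (((a*x : ℝ):ℂ) + a)) (Set.Ioi 0) := by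
    refine MeasureTheory.IntegrableOn.congr_fun
      ((keyA h1 h2).1.const_mul ((a:ℂ)^s / a)) (fun x hx => ?_) measurableSet_Ioi
    exact (hcomp x hx).symm
  have hint : IntegrableOn (fun t : ℝ => (t:ℂ)^s / (t + a)) (Set.Ioi 0) := by
    have := (MeasureTheory.integrableOn_Ioi_comp_mul_left_iff
      (fun t : ℝ => (t:ℂ)^s / (t + a)) 0 ha).mp ?_
    · rwa [mul_zero] at this
    · exact hIcomp
  refine ⟨hint, ?_⟩
  have hcm := MeasureTheory.integral_comp_mul_left_Ioi
    (fun t : ℝ => (t:ℂ)^s / (t + a)) 0 ha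
  rw [mul_zero] at hcm
  have h2' : ∫ x in Set.Ioi (0:ℝ), ((a*x : ℝ):ℂ)^s / (((a*x : ℝ):ℂ) + a)
      = ((a:ℂ)^s / a) * ((π:ℂ) / Complex.sin (π * (s+1))) := by
    rw [setIntegral_congr_fun measurableSet_Ioi hcomp, integral_const_mul,
      (keyA h1 h2).2]
  calc ∫ t in Set.Ioi (0:ℝ), (t:ℂ)^s / ((t:ℂ) + a)
      = a • (a⁻¹ • ∫ t in Set.Ioi (0:ℝ), (t:ℂ)^s / ((t:ℂ) + a)) := by
        rw [smul_smul, mul_inv_cancel₀ ha.ne', one_smul]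
    _ = a • ∫ x in Set.Ioi (0:ℝ), ((a*x : ℝ):ℂ)^s / (((a*x : ℝ):ℂ) + a) := by
        rw [← hcm]
    _ = a • (((a:ℂ)^s / a) * ((π:ℂ) / Complex.sin (π * (s+1)))) := by rw [h2']
    _ = (a:ℂ)^s * ((π:ℂ) / Complex.sin (π * (s+1))) := by
        rw [Complex.real_smul]; field_simp

lemma keyBr (r : ℝ) {a : ℝ} (ha : 0 < a) :
    ∫ t in Set.Ioi (0:ℝ), t ^ r / (t + a) =
      a ^ r * ∫ t in Set.Ioi (0:ℝ), t ^ r / (t + 1) := by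
  have hcm := MeasureTheory.integral_comp_mul_left_Ioi
    (fun t : ℝ => t ^ r / (t + a)) 0 ha
  rw [mul_zero] at hcm
  have hcomp : ∀ x ∈ Set.Ioi (0:ℝ),
      (a*x) ^ r / (a*x + a) = (a ^ r / a) * (x ^ r / (x+1)) := by
    intro x hx
    have hx' : (0:ℝ) < x := hx
    rw [Real.mul_rpow ha.le hx'.le, show a * x + a = a * (x + 1) by ring]
    field_simp
  have h2' : ∫ x in Set.Ioi (0:ℝ), (a*x) ^ r / (a*x + a)
      = (a ^ r / a) * ∫ t in Set.Ioi (0:ℝ), t ^ r / (t + 1) := by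
    rw [setIntegral_congr_fun measurableSet_Ioi hcomp, integral_const_mul]
  calc ∫ t in Set.Ioi (0:ℝ), t ^ r / (t + a)
      = a • (a⁻¹ • ∫ t in Set.Ioi (0:ℝ), t ^ r / (t + a)) := by
        rw [smul_smul, mul_inv_cancel₀ ha.ne', one_smul]
    _ = a • ∫ x in Set.Ioi (0:ℝ), (a*x) ^ r / (a*x + a) := by rw [← hcm]
    _ = a • ((a ^ r / a) * ∫ t in Set.Ioi (0:ℝ), t ^ r / (t + 1)) := by rw [h2']
    _ = a ^ r * ∫ t in Set.Ioi (0:ℝ), t ^ r / (t + 1) := by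
        rw [smul_eq_mul]; field_simp

/-- For `-1 < Re s < 0`, the Mellin transform of the conductance
`⟨g(t)⟩ = Σ_{n≥0} 1/(1 + 2ⁿ/t)` converges (the integrand is integrable on `(0,∞)`)
and equals `(π/sin(π(s-1))) · 1/(1 - 2^s)`, where `2^s = exp(s log 2)`. -/
theorem stmt5 (s : ℂ) (h1 : -1 < s.re) (h2 : s.re < 0) :
    IntegrableOn (fun t : ℝ =>
      ((∑' n : ℕ, 1 / (1 + 2 ^ n / t) : ℝ) : ℂ) * (t : ℂ) ^ (s - 1))
      (Set.Ioi (0 : ℝ)) ∧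
    ∫ t in Set.Ioi (0 : ℝ),
        ((∑' n : ℕ, 1 / (1 + 2 ^ n / t) : ℝ) : ℂ) * (t : ℂ) ^ (s - 1) =
      (π : ℂ) / Complex.sin ((π : ℂ) * (s - 1)) *
        (1 / (1 - Complex.exp (s * Real.log 2))) := by
  set f : ℕ → ℝ → ℂ := fun n t => (t:ℂ)^s / ((t:ℂ) + ((2:ℝ)^n : ℝ)) with hf
  have h2n : ∀ n : ℕ, (0:ℝ) < 2 ^ n := fun n => pow_pos two_pos n
  have hFint : ∀ n, IntegrableOn (f n) (Set.Ioi 0) := fun n =>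
    (keyB h1 h2 (h2n n)).1
  -- norms
  have hnorm : ∀ n, ∀ t ∈ Set.Ioi (0:ℝ), ‖f n t‖ = t ^ s.re / (t + 2 ^ n) := by
    intro n t ht
    have ht' : (0:ℝ) < t := ht
    rw [hf]
    simp only [norm_div]
    rw [Complex.norm_cpow_eq_rpow_re_of_pos ht',
      show (t:ℂ) + ((2:ℝ)^n : ℝ) = ((t + 2^n : ℝ) : ℂ) by push_cast; ring,
      Complex.norm_real, Real.norm_eq_abs, abs_of_pos (by positivity)]
  -- integral of norms
  have hnormint : ∀ n, ∫ t in Set.Ioi (0:ℝ), ‖f n t‖ =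
      ((2:ℝ)^s.re)^n * ∫ t in Set.Ioi (0:ℝ), t ^ s.re / (t + 1) := by
    intro n
    rw [setIntegral_congr_fun measurableSet_Ioi (hnorm n), keyBr s.re (h2n n)]
    congr 1
    rw [← Real.rpow_natCast 2 n, ← Real.rpow_natCast ((2:ℝ)^s.re) n,
      ← Real.rpow_mul (by norm_num), ← Real.rpow_mul (by norm_num), mul_comm]
  have hratio : (0:ℝ) ≤ (2:ℝ)^s.re ∧ (2:ℝ)^s.re < 1 :=
    ⟨Real.rpow_nonneg (by norm_num) _, Real.rpow_lt_one_of_one_lt_of_neg one_lt_two h2⟩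
  have hsumnorm : Summable (fun n => ∫ t in Set.Ioi (0:ℝ), ‖f n t‖) := by
    simp only [hnormint]
    exact (summable_geometric_of_lt_one hratio.1 hratio.2).mul_right _
  -- lintegral bound
  have hlint : ∑' n, ∫⁻ t in Set.Ioi (0:ℝ), ‖f n t‖₊ ≠ ⊤ := by
    have heach : ∀ n, ∫⁻ t in Set.Ioi (0:ℝ), ‖f n t‖₊ =
        ENNReal.ofReal (∫ t in Set.Ioi (0:ℝ), ‖f n t‖) := fun n =>
      (MeasureTheory.ofReal_integral_norm_eq_lintegral_enorm (hFint n)).symm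
    simp only [heach]
    rw [← ENNReal.ofReal_tsum_of_nonneg
      (fun n => integral_nonneg (fun t => norm_nonneg _)) hsumnorm]
    exact ENNReal.ofReal_ne_top
  -- pointwise summability
  have hptsum : ∀ t ∈ Set.Ioi (0:ℝ), Summable (fun n => ‖f n t‖) := by
    intro t ht
    have ht' : (0:ℝ) < t := ht
    refine Summable.of_nonneg_of_le (fun n => norm_nonneg _)
      (fun n => ?_) ((summable_geometric_of_lt_one (by norm_num)
        (by norm_num : (2:ℝ)⁻¹ < 1)).mul_left (t ^ s.re))
    rw [hnorm n t ht]
    rw [show t ^ s.re * (2:ℝ)⁻¹ ^ n = t ^ s.re / 2 ^ n by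
      rw [div_eq_mul_inv, inv_pow]]
    gcongr
    exact le_add_of_nonneg_left ht'.le
  have hptsum' : ∀ t ∈ Set.Ioi (0:ℝ), Summable (fun n => f n t) :=
    fun t ht => (hptsum t ht).of_norm
  -- measurability of the tsum
  have hFsm : AEStronglyMeasurable (fun t => ∑' n, f n t)
      (volume.restrict (Set.Ioi 0)) := by
    have hlim : ∀ᵐ t ∂(volume.restrict (Set.Ioi (0:ℝ))),
        Tendsto (fun N => ∑ n ∈ Finset.range N, f n t) atTop (𝓝 (∑' n, f n t)) := by
      rw [ae_restrict_iff' measurableSet_Ioi]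
      filter_upwards with t
      intro ht
      exact ((hptsum' t ht).hasSum).tendsto_sum_nat
    exact aestronglyMeasurable_of_tendsto_ae atTop
      (fun N => Finset.aestronglyMeasurable_sum (Finset.range N)
        (fun n _ => (hFint n).aestronglyMeasurable)) (by simpa only [Finset.sum_apply] using hlim)
  -- integrability of the tsum
  have hFintsum : IntegrableOn (fun t => ∑' n, f n t) (Set.Ioi 0) := by
    refine ⟨hFsm, ?_⟩
    show (∫⁻ t, ‖∑' n, f n t‖₊ ∂(volume.restrict (Set.Ioi (0:ℝ)))) < ⊤
    calc ∫⁻ t in Set.Ioi (0:ℝ), ‖∑' n, f n t‖₊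
        ≤ ∫⁻ t in Set.Ioi (0:ℝ), ∑' n, (‖f n t‖₊ : ℝ≥0∞) := by
          refine lintegral_mono_ae ?_
          rw [ae_restrict_iff' measurableSet_Ioi]
          filter_upwards with t ht
          have hs : Summable (fun n => ‖f n t‖₊) :=
            NNReal.summable_coe.mp (by simpa using hptsum t ht)
          calc (‖∑' n, f n t‖₊ : ℝ≥0∞) ≤ ((∑' n, ‖f n t‖₊ : ℝ≥0) : ℝ≥0∞) :=
                ENNReal.coe_le_coe.2 (nnnorm_tsum_le hs)
            _ = ∑' n, (‖f n t‖₊ : ℝ≥0∞) := ENNReal.coe_tsum hs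
      _ = ∑' n, ∫⁻ t in Set.Ioi (0:ℝ), ‖f n t‖₊ :=
          lintegral_tsum (fun n => (hFint n).aestronglyMeasurable.enorm)
      _ < ⊤ := hlint.lt_top
  -- identification of the integrand
  have heq : ∀ t ∈ Set.Ioi (0:ℝ),
      ((∑' n : ℕ, 1 / (1 + 2 ^ n / t) : ℝ) : ℂ) * (t : ℂ) ^ (s - 1) =
      ∑' n, f n t := by
    intro t ht
    have ht' : (0:ℝ) < t := ht
    have ht0 : (t:ℂ) ≠ 0 := Complex.ofReal_ne_zero.mpr ht'.ne'
    rw [Complex.ofReal_tsum, tsum_mul_right.symm]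
    refine tsum_congr fun n => ?_
    have htn : (t:ℂ) + (2:ℂ)^n ≠ 0 := by
      rw [show (t:ℂ) + (2:ℂ)^n = ((t + 2^n : ℝ) : ℂ) by push_cast; ring]
      exact Complex.ofReal_ne_zero.mpr (by positivity)
    have hts : (t:ℂ) ^ (s - 1) = (t:ℂ)^s / t := by
      rw [Complex.cpow_sub _ _ ht0, Complex.cpow_one]
    rw [hf]
    push_cast
    have hsplit : (1:ℂ) + 2^n/(t:ℂ) = ((t:ℂ)+2^n)/t := by field_simp
    rw [hts, hsplit, one_div_div, div_mul_div_comm,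
      mul_comm ((t:ℂ)+2^n) (t:ℂ), mul_div_mul_left _ _ ht0]
  -- the value of the sum of integrals
  set z : ℂ := Complex.exp (s * Real.log 2) with hz
  have hzn : ‖z‖ < 1 := by
    rw [hz, Complex.norm_exp]
    have : (s * (Real.log 2 : ℂ)).re = s.re * Real.log 2 := by
      rw [Complex.mul_re, Complex.ofReal_re, Complex.ofReal_im, mul_zero, sub_zero]
    rw [this]
    exact Real.exp_lt_one_iff.mpr
      (mul_neg_of_neg_of_pos h2 (Real.log_pos one_lt_two))
  have hterm : ∀ n : ℕ, (((2:ℝ)^n : ℝ) : ℂ)^s = z^n := by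
    intro n
    have h2c : ((2:ℝ)^n : ℝ) = ((2:ℝ) ^ n) := rfl
    have hne : (((2:ℝ)^n : ℝ) : ℂ) ≠ 0 := Complex.ofReal_ne_zero.mpr (h2n n).ne'
    rw [Complex.cpow_def_of_ne_zero hne]
    rw [← Complex.ofReal_log (h2n n).le, Real.log_pow]
    rw [hz, ← Complex.exp_nat_mul]
    congr 1
    push_cast
    ring
  have hsumval : ∑' n, ∫ t in Set.Ioi (0:ℝ), f n t =
      (π : ℂ) / Complex.sin ((π : ℂ) * (s - 1)) *
        (1 / (1 - Complex.exp (s * Real.log 2))) := by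
    have hval : ∀ n, ∫ t in Set.Ioi (0:ℝ), f n t =
        z^n * ((π:ℂ) / Complex.sin (π * (s+1))) := by
      intro n
      rw [hf]
      rw [(keyB h1 h2 (h2n n)).2, hterm n]
    simp only [hval]
    rw [tsum_mul_right, tsum_geometric_of_norm_lt_one hzn]
    have hsin : Complex.sin (π * (s+1)) = Complex.sin (π * (s-1)) := by
      rw [show (π:ℂ) * (s+1) = (π:ℂ) * (s-1) + 2 * π by ring,
        Complex.sin_add_two_pi]
    rw [hsin, ← hz, one_div]
    ring
  constructor
  · exact hFintsum.congr_fun (fun t ht => (heq t ht).symm) measurableSet_Ioi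
  · rw [setIntegral_congr_fun measurableSet_Ioi heq,
      MeasureTheory.integral_tsum (fun n => (hFint n).aestronglyMeasurable) hlint,
      hsumval]
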